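/- Lower bound for the numerical solution at the first interior node: Let J ∈ ℕ with J ≥ 2, Δx := 1/J, and Δt > 0 satisfy Δt·(1 + 1/(16Δx²)) ≤ 1 and Δt ≤ 1/2. Let U^n_j be defined by U^0_j = 1, U^n_0 = U^n_J = 1, and U^n_j = U^{n−1}_j + Δt·[ (x_j²(1−x_j)²/(2Δx²))·(U^{n−1}_{j+1} − 2U^{n−1}_j + U^{n−1}_{j−1}) − U^{n−1}_j ] for 1 ≤ j ≤ J−1, where x_j := jΔx. Then for every n ≥ 0: U^n_1 ≥ Σ_{m=0}^{n−1} (1−2Δt)^m · (Δt/2)·(1−Δx)² + (1−2Δt)^n. -/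

import Mathlib

open Finset

/-- **Lower bound for the numerical solution at the first interior node.**
Under the CFL-type condition and `Δt ≤ 1/2`,
`U^n_1 ≥ Σ_{m=0}^{n-1} (1-2Δt)^m (Δt/2)(1-Δx)² + (1-2Δt)^n`. -/
theorem first_interior_node_lower_bound
    (J : ℕ) (hJ : 2 ≤ J) (Δx Δt : ℝ)
    (hΔx : Δx = 1 / (J : ℝ)) (hΔt : 0 < Δt)
    (hCFL : Δt * (1 + 1 / (16 * Δx ^ 2)) ≤ 1)
    (hΔt2 : Δt ≤ 1 / 2)
    (U : ℕ → ℕ → ℝ)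
    (hinit : ∀ j ≤ J, U 0 j = 1)
    (hbc0 : ∀ n, U n 0 = 1) (hbcJ : ∀ n, U n J = 1)
    (hupd : ∀ n : ℕ, ∀ j : ℕ, 1 ≤ j → j ≤ J - 1 →
      U (n + 1) j = U n j
        + Δt * ((((j : ℝ) * Δx) ^ 2 * (1 - (j : ℝ) * Δx) ^ 2 / (2 * Δx ^ 2))
              * (U n (j + 1) - 2 * U n j + U n (j - 1)) - U n j)) :
    ∀ n : ℕ,
      (∑ m ∈ Finset.range n, (1 - 2 * Δt) ^ m * (Δt / 2) * (1 - Δx) ^ 2)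
        + (1 - 2 * Δt) ^ n ≤ U n 1 := by
  have hJ0 : (0:ℝ) < (J:ℝ) := by positivity
  have hJ2 : (2:ℝ) ≤ (J:ℝ) := by exact_mod_cast hJ
  have hΔxpos : 0 < Δx := by rw [hΔx]; positivity
  have hΔxhalf : Δx ≤ 1/2 := by
    rw [hΔx]
    rw [div_le_div_iff₀ hJ0 (by norm_num)]
    linarith
  have hd : (0:ℝ) < Δx ^ 2 := by positivity
  -- nonnegativity and boundedness
  have key : ∀ n, ∀ j ≤ J, 0 ≤ U n j ∧ U n j ≤ 1 := by
    intro n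
    induction n with
    | zero => intro j hj; rw [hinit j hj]; norm_num
    | succ n ih =>
      intro j hj
      rcases eq_or_ne j 0 with rfl | hj0
      · rw [hbc0]; norm_num
      rcases eq_or_ne j J with rfl | hjJ
      · rw [hbcJ]; norm_num
      have hj1 : 1 ≤ j := Nat.one_le_iff_ne_zero.mpr hj0
      have hjJ1 : j ≤ J - 1 := by omega
      have hx0 : 0 ≤ (j:ℝ) * Δx := by positivity
      have hx1 : (j:ℝ) * Δx ≤ 1 := by
        rw [hΔx, mul_one_div, div_le_one hJ0]
        exact_mod_cast hj
      have hy0 : 0 ≤ (j:ℝ)*Δx * (1 - (j:ℝ)*Δx) :=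
        mul_nonneg hx0 (by linarith)
      have hy1 : (j:ℝ)*Δx * (1 - (j:ℝ)*Δx) ≤ 1/4 := by
        nlinarith [sq_nonneg ((j:ℝ)*Δx - 1/2)]
      have hq : ((j:ℝ)*Δx)^2 * (1 - (j:ℝ)*Δx)^2 ≤ 1/16 := by
        nlinarith [mul_le_mul_of_nonneg_left hy1 hy0]
      set b := ((j:ℝ)*Δx)^2 * (1 - (j:ℝ)*Δx)^2 / (2*Δx^2) with hbdef
      have hb0 : 0 ≤ b := by positivity
      have hb : b ≤ 1/(32*Δx^2) := by
        rw [hbdef]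
        rw [div_le_div_iff₀ (by positivity) (by positivity)]
        nlinarith
      have hcoef : Δt + 2*Δt*b ≤ 1 := by
        have h1 : Δt * (1 + 1/(16*Δx^2)) = Δt + Δt/(16*Δx^2) := by ring
        have h2 : 2*Δt*b ≤ 2*Δt*(1/(32*Δx^2)) :=
          mul_le_mul_of_nonneg_left hb (by positivity)
        have h3 : 2*Δt*(1/(32*Δx^2)) = Δt/(16*Δx^2) := by ring
        linarith [hCFL, h1 ▸ hCFL]
      have h1 := ih (j+1) (by omega)
      have h2 := ih j (by omega)
      have h3 := ih (j-1) (by omega)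
      rw [hupd n j hj1 hjJ1]
      have heq : U n j + Δt * (b * (U n (j + 1) - 2 * U n j + U n (j - 1)) - U n j)
          = Δt*b*(U n (j+1)) + Δt*b*(U n (j-1)) + (1 - Δt - 2*Δt*b)*(U n j) := by ring
      rw [heq]
      have hcn : 0 ≤ 1 - Δt - 2*Δt*b := by linarith
      have ha0 : 0 ≤ Δt*b := mul_nonneg hΔt.le hb0
      constructor
      · have p1 : 0 ≤ Δt*b*(U n (j+1)) := mul_nonneg ha0 h1.1
        have p2 : 0 ≤ Δt*b*(U n (j-1)) := mul_nonneg ha0 h3.1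
        have p3 : 0 ≤ (1 - Δt - 2*Δt*b)*(U n j) := mul_nonneg hcn h2.1
        linarith
      · have p1 : Δt*b*(U n (j+1)) ≤ Δt*b*1 := mul_le_mul_of_nonneg_left h1.2 ha0
        have p2 : Δt*b*(U n (j-1)) ≤ Δt*b*1 := mul_le_mul_of_nonneg_left h3.2 ha0
        have p3 : (1 - Δt - 2*Δt*b)*(U n j) ≤ (1 - Δt - 2*Δt*b)*1 :=
          mul_le_mul_of_nonneg_left h2.2 hcn
        linarith
  have h12 : (0:ℝ) ≤ 1 - 2*Δt := by linarith
  have hc0 : (0:ℝ) ≤ (Δt/2) * (1-Δx)^2 := by positivity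
  intro n
  induction n with
  | zero => simp [hinit 1 (by omega)]
  | succ n ih =>
    have hSnonneg : 0 ≤ (∑ m ∈ Finset.range n, (1 - 2 * Δt) ^ m * (Δt / 2) * (1 - Δx) ^ 2)
        + (1 - 2 * Δt) ^ n := by
      apply add_nonneg
      · apply Finset.sum_nonneg
        intro i _
        have := pow_nonneg h12 i
        positivity
      · exact pow_nonneg h12 n
    have hsum : (∑ m ∈ Finset.range (n+1), (1 - 2 * Δt) ^ m * (Δt / 2) * (1 - Δx) ^ 2)
          + (1 - 2 * Δt) ^ (n+1)
        = (1 - 2*Δt) * ((∑ m ∈ Finset.range n, (1 - 2 * Δt) ^ m * (Δt / 2) * (1 - Δx) ^ 2)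
          + (1 - 2 * Δt) ^ n) + (Δt/2) * (1-Δx)^2 := by
      rw [Finset.sum_range_succ', mul_add, Finset.mul_sum]
      have : ∀ i ∈ Finset.range n, (1 - 2*Δt) ^ (i+1) * (Δt / 2) * (1 - Δx) ^ 2
          = (1 - 2*Δt) * ((1 - 2*Δt) ^ i * (Δt / 2) * (1 - Δx) ^ 2) := by
        intro i _; ring
      rw [Finset.sum_congr rfl this]
      ring
    rw [hsum]
    have hup := hupd n 1 le_rfl (by omega)
    have hU0 : U n 0 = 1 := hbc0 n
    norm_num at hup
    have hne : (2:ℝ) * Δx ^ 2 ≠ 0 := by positivity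
    have hcoefeq : Δx ^ 2 * (1 - Δx) ^ 2 / (2 * Δx ^ 2) = (1 - Δx)^2 / 2 := by
      field_simp
    rw [hcoefeq, hU0] at hup
    have hU2 : 0 ≤ U n 2 := (key n 2 hJ).1
    have hcoef2 : 1 - 2*Δt ≤ 1 - Δt - Δt * ((1-Δx)^2) := by
      nlinarith [mul_nonneg hΔt.le (mul_nonneg hΔxpos.le (by linarith : (0:ℝ) ≤ 2 - Δx))]
    -- U (n+1) 1 = (Δt/2)(1-Δx)^2 (U n 2 + 1) + (1 - Δt - Δt(1-Δx)^2) U n 1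
    have heq : U (n+1) 1 = (Δt/2)*(1-Δx)^2 * (U n 2 + 1)
        + (1 - Δt - Δt*((1-Δx)^2)) * U n 1 := by
      rw [hup]; ring
    rw [heq]
    have hcoefpos : 0 ≤ 1 - Δt - Δt * ((1-Δx)^2) := le_trans h12 hcoef2
    have p1 : 0 ≤ (Δt/2)*(1-Δx)^2 * (U n 2) := mul_nonneg hc0 hU2
    have p2 : (1 - Δt - Δt*((1-Δx)^2)) * (∑ m ∈ Finset.range n, (1 - 2 * Δt) ^ m * (Δt / 2) * (1 - Δx) ^ 2 + (1 - 2 * Δt) ^ n)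
        ≤ (1 - Δt - Δt*((1-Δx)^2)) * U n 1 := mul_le_mul_of_nonneg_left ih hcoefpos
    have p3 : (1 - 2*Δt) * (∑ m ∈ Finset.range n, (1 - 2 * Δt) ^ m * (Δt / 2) * (1 - Δx) ^ 2 + (1 - 2 * Δt) ^ n)
        ≤ (1 - Δt - Δt*((1-Δx)^2)) * (∑ m ∈ Finset.range n, (1 - 2 * Δt) ^ m * (Δt / 2) * (1 - Δx) ^ 2 + (1 - 2 * Δt) ^ n) :=
      mul_le_mul_of_nonneg_right hcoef2 hSnonneg
    linarith
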